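/- If A is a dense subring of B and M is a maximal ideal of B, then there is no prime ideal P of B with M ∩ A strictly contained in P ∩ A. -/
import Mathlib


def IsDenseSubring {B : Type*} [CommRing B] (A : Subring B) : Prop :=
  ∀ I : Ideal B, ∀ b ∉ I.radical, ∃ a ∉ I.radical, a * b ∈ A

theorem stmt_14 {B : Type*} [CommRing B] (A : Subring B) (hA : IsDenseSubring A)
    (M : Ideal B) (hM : M.IsMaximal) :
    ¬ ∃ P : Ideal B, P.IsPrime ∧ M.comap A.subtype < P.comap A.subtype := by
  rintro ⟨P, hP, hlt⟩
  have hMP : M ≤ P := by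
    intro m hm
    by_contra hmP
    have hmrad : m ∉ P.radical := by rwa [hP.radical]
    obtain ⟨a, haP, haA⟩ := hA P m hmrad
    rw [hP.radical] at haP
    have h1 : (⟨a * m, haA⟩ : A) ∈ M.comap A.subtype := by
      simpa using Ideal.mul_mem_left M a hm
    have h2 : a * m ∈ P := hlt.le h1
    exact (hP.mem_or_mem h2).elim haP hmP
  have heq : M = P := hM.eq_of_le hP.ne_top hMP
  rw [heq] at hlt
  exact lt_irrefl _ hlt
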